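/- For pairwise coprime integers u and v, gcd(u⁴ + 2u³v, v⁴ + 2v³u) = gcd(3, u - v). -/

import Mathlib

theorem stmt3 (u v : ℤ) (huv : IsCoprime u v) :
    Int.gcd (u ^ 4 + 2 * u ^ 3 * v) (v ^ 4 + 2 * v ^ 3 * u) = Int.gcd 3 (u - v) := by
  set A : ℤ := u ^ 4 + 2 * u ^ 3 * v with hAdef
  set B : ℤ := v ^ 4 + 2 * v ^ 3 * u with hBdef
  set D : ℤ := (Int.gcd A B : ℤ) with hDdef
  have hDA : D ∣ A := Int.gcd_dvd_left _ _
  have hDB : D ∣ B := Int.gcd_dvd_right _ _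
  -- IsCoprime u B
  have huB : IsCoprime u B := by
    have h1 : IsCoprime u (v ^ 4) := huv.pow_right
    exact h1.add_mul_right_right (2 * v ^ 3)
  have hvA : IsCoprime v A := by
    have h1 : IsCoprime v (u ^ 4) := huv.symm.pow_right
    exact h1.add_mul_right_right (2 * u ^ 3)
  have hDu : IsCoprime D u := (huB.symm.of_isCoprime_of_dvd_left hDB)
  have hDv : IsCoprime D v := (hvA.symm.of_isCoprime_of_dvd_left hDA)
  have hDu3 : IsCoprime D (u ^ 3) := hDu.pow_right
  have hDv3 : IsCoprime D (v ^ 3) := hDv.pow_right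
  have hD1 : D ∣ u + 2 * v := by
    have : D ∣ u ^ 3 * (u + 2 * v) := by
      have : u ^ 3 * (u + 2 * v) = A := by rw [hAdef]; ring
      rwa [this]
    exact hDu3.dvd_of_dvd_mul_left this
  have hD2 : D ∣ v + 2 * u := by
    have : D ∣ v ^ 3 * (v + 2 * u) := by
      have : v ^ 3 * (v + 2 * u) = B := by rw [hBdef]; ring
      rwa [this]
    exact hDv3.dvd_of_dvd_mul_left this
  have hD3u : D ∣ 3 * u := by
    have : 3 * u = 2 * (v + 2 * u) - (u + 2 * v) := by ring
    rw [this]; exact dvd_sub (Dvd.dvd.mul_left hD2 2) hD1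
  have hD3v : D ∣ 3 * v := by
    have : 3 * v = 2 * (u + 2 * v) - (v + 2 * u) := by ring
    rw [this]; exact dvd_sub (Dvd.dvd.mul_left hD1 2) hD2
  have hD3 : D ∣ 3 := by
    obtain ⟨x, y, hxy⟩ := huv
    have : (3 : ℤ) = x * (3 * u) + y * (3 * v) := by
      have : x * (3 * u) + y * (3 * v) = 3 * (x * u + y * v) := by ring
      rw [this, hxy]; ring
    rw [this]
    exact dvd_add (Dvd.dvd.mul_left hD3u x) (Dvd.dvd.mul_left hD3v y)
  have hDuv : D ∣ u - v := by
    have : u - v = (v + 2 * u) - (u + 2 * v) := by ring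
    rw [this]; exact dvd_sub hD2 hD1
  -- Direction 1: gcd A B ∣ gcd 3 (u - v)
  have dir1 : Int.gcd A B ∣ Int.gcd 3 (u - v) := by
    have := Int.dvd_gcd hD3 hDuv
    exact_mod_cast this
  -- Direction 2
  have dir2 : Int.gcd 3 (u - v) ∣ Int.gcd A B := by
    set E := Int.gcd 3 (u - v) with hE
    have hE3 : (E : ℤ) ∣ 3 := Int.gcd_dvd_left _ _
    have hEuv : (E : ℤ) ∣ u - v := Int.gcd_dvd_right _ _
    have hE3' : E ∣ 3 := by exact_mod_cast hE3
    rcases (Nat.prime_three.eq_one_or_self_of_dvd E hE3') with h1 | h3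
    · rw [h1]; exact one_dvd _
    · -- E = 3, so 3 ∣ u - v
      have h3uv : (3 : ℤ) ∣ u - v := by rw [h3] at hEuv; exact_mod_cast hEuv
      have h3A : (3 : ℤ) ∣ A := by
        obtain ⟨k, hk⟩ := h3uv
        have : A = 3 * (k * u ^ 3 + u ^ 3 * v) := by
          rw [hAdef]
          have : u = v + 3 * k := by linarith [hk]
          rw [this]; ring
        rw [this]; exact Dvd.intro _ rfl
      have h3B : (3 : ℤ) ∣ B := by
        obtain ⟨k, hk⟩ := h3uv
        have : B = 3 * (-k * v ^ 3 + v ^ 3 * u) := by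
          rw [hBdef]
          have : v = u - 3 * k := by linarith [hk]
          rw [this]; ring
        rw [this]; exact Dvd.intro _ rfl
      have := Int.dvd_gcd h3A h3B
      rw [h3]
      exact Int.natCast_dvd_natCast.mp (by exact_mod_cast this)
  exact Nat.dvd_antisymm dir1 dir2
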